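/- Let a, b, n be natural numbers with n < a + b ≤ 2n. The linear map Φ : ℝ[t]_{<n-b} × ℝ[t]_{<n-a} × ℝ[t]_{<a+b-n} → ℝ[t]_{<n} defined by Φ(r,s,q) = (t+1)^b r(t) + (t-1)^a s(t) + q(t) is bijective. -/
import Mathlib


open Polynomial


lemma iter_deriv_zero {k : ℕ} {p : ℝ[X]} (h : derivative^[k] p = 0) :
    p = 0 ∨ p.natDegree < k := by
  induction k generalizing p with
  | zero => exact Or.inl h
  | succ k ih =>
    rw [Function.iterate_succ_apply] at h
    rcases ih h with h0 | hd
    · rcases eq_or_ne p.natDegree 0 with h1 | h1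
      · exact Or.inr (by omega)
      · have h2 := degree_derivative_eq p (Nat.pos_of_ne_zero h1)
        rw [h0, degree_zero] at h2
        exact absurd h2.symm (by simp)
    · rcases eq_or_ne p.natDegree 0 with h1 | h1
      · exact Or.inr (by omega)
      · have h2 := degree_derivative_eq p (Nat.pos_of_ne_zero h1)
        have h3 := natDegree_eq_of_degree_eq_some h2
        right; omega

lemma iter_deriv_add (k : ℕ) (f g : ℝ[X]) :
    derivative^[k] (f + g) = derivative^[k] f + derivative^[k] g := by
  induction k generalizing f g with
  | zero => rfl
  | succ k ih => simp [Function.iterate_succ_apply, ih]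

lemma finrank_degLT (m : ℕ) : Module.finrank ℝ (Polynomial.degreeLT ℝ m) = m := by
  rw [(Polynomial.degreeLTEquiv ℝ m).finrank_eq]; exact Module.finrank_fin_fun ℝ

lemma coprime_pm : IsCoprime (X + 1 : ℝ[X]) (X - 1) := by
  have := isCoprime_X_sub_C_of_isUnit_sub (a := (-1:ℝ)) (b := 1) (by norm_num)
  simpa [sub_neg_eq_add, map_one] using this

lemma natDeg_of_memLT {m : ℕ} {r : ℝ[X]} (hr : r ∈ degreeLT ℝ m) (h0 : r ≠ 0) :
    r.natDegree < m := by
  rw [mem_degreeLT, degree_eq_natDegree h0] at hr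
  exact_mod_cast hr

lemma mem_deg_mul {c : ℝ} {b n : ℕ} (hb : b ≤ n) {r : ℝ[X]}
    (hr : r ∈ degreeLT ℝ (n - b)) : (X + C c) ^ b * r ∈ degreeLT ℝ n := by
  rw [mem_degreeLT]
  rcases eq_or_ne r 0 with rfl | hr0
  · rw [mul_zero, degree_zero]; exact WithBot.bot_lt_coe n
  · have h1 := natDeg_of_memLT hr hr0
    rw [degree_mul, degree_pow, degree_X_add_C, degree_eq_natDegree hr0,
      nsmul_eq_mul, mul_one]
    exact_mod_cast (by push_cast; exact_mod_cast by omega : ((b + r.natDegree : ℕ) : WithBot ℕ) < (n:ℕ))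

/-- The linear map `Φ(r, s, q) = (t+1)^b r(t) + (t-1)^a s(t) + q(t)` from
`ℝ[t]_{<n-b} × ℝ[t]_{<n-a} × ℝ[t]_{<a+b-n}` to real polynomials. -/
noncomputable def Phi3 (a b n : ℕ) :
    (Polynomial.degreeLT ℝ (n - b) × Polynomial.degreeLT ℝ (n - a) ×
      Polynomial.degreeLT ℝ (a + b - n)) →ₗ[ℝ] Polynomial ℝ where
  toFun rsq := (Polynomial.X + 1) ^ b * (rsq.1 : Polynomial ℝ) +
    (Polynomial.X - 1) ^ a * (rsq.2.1 : Polynomial ℝ) + (rsq.2.2 : Polynomial ℝ)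
  map_add' x y := by simp [mul_add]; ring
  map_smul' c x := by simp [smul_add, Polynomial.smul_eq_C_mul]; ring

/-- For `a, b ≤ n < a + b ≤ 2n`, the map
`Φ(r,s,q) = (t+1)^b r + (t-1)^a s + q` is a bijection from
`ℝ[t]_{<n-b} × ℝ[t]_{<n-a} × ℝ[t]_{<a+b-n}` onto `ℝ[t]_{<n}`. -/
theorem phi3_bijective (a b n : ℕ) (ha : a ≤ n) (hb : b ≤ n)
    (h1 : n < a + b) (h2 : a + b ≤ 2 * n) :
    Function.Injective (Phi3 a b n) ∧
    LinearMap.range (Phi3 a b n) = Polynomial.degreeLT ℝ n := by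
  set k := a + b - n with hk
  have hka : k ≤ a := by omega
  have hkb : k ≤ b := by omega
  have hx1 : (X + 1 : ℝ[X]).natDegree = 1 := by simpa using natDegree_X_add_C (1:ℝ)
  have hx2 : (X - 1 : ℝ[X]).natDegree = 1 := by simpa using natDegree_X_sub_C (1:ℝ)
  have hXp : (X + 1 : ℝ[X]) ≠ 0 := by intro h0; rw [h0] at hx1; simp at hx1
  have hXm : (X - 1 : ℝ[X]) ≠ 0 := by intro h0; rw [h0] at hx2; simp at hx2
  have hinj : Function.Injective (Phi3 a b n) := by
    rw [← LinearMap.ker_eq_bot, LinearMap.ker_eq_bot']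
    rintro ⟨r, s, q⟩ hm
    have hm' : (X + 1 : ℝ[X]) ^ b * (r : ℝ[X]) + (X - 1) ^ a * (s : ℝ[X]) + (q : ℝ[X]) = 0 := hm
    have hq0 : derivative^[k] (q : ℝ[X]) = 0 := by
      rcases eq_or_ne (q : ℝ[X]) 0 with hq | hq
      · rw [hq]; simp
      · exact iterate_derivative_eq_zero (natDeg_of_memLT q.2 hq)
    have hsum : derivative^[k] ((X + 1 : ℝ[X]) ^ b * (r : ℝ[X]))
        + derivative^[k] ((X - 1 : ℝ[X]) ^ a * (s : ℝ[X])) = 0 := by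
      have := congrArg (derivative^[k]) hm'
      rw [iter_deriv_add, iter_deriv_add, hq0, add_zero] at this
      simpa using this
    have hd1 : (X + 1 : ℝ[X]) ^ (b - k) ∣ derivative^[k] ((X + 1 : ℝ[X]) ^ b * (r : ℝ[X])) :=
      pow_sub_dvd_iterate_derivative_of_pow_dvd k (Dvd.intro _ rfl)
    have hd2 : (X - 1 : ℝ[X]) ^ (a - k) ∣ derivative^[k] ((X + 1 : ℝ[X]) ^ b * (r : ℝ[X])) := by
      have hdv : (X - 1 : ℝ[X]) ^ (a - k) ∣ derivative^[k] ((X - 1 : ℝ[X]) ^ a * (s : ℝ[X])) :=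
        pow_sub_dvd_iterate_derivative_of_pow_dvd k (Dvd.intro _ rfl)
      rw [eq_neg_of_add_eq_zero_left hsum]
      exact hdv.neg_right
    have hdp : (X + 1 : ℝ[X]) ^ (b - k) * (X - 1) ^ (a - k)
        ∣ derivative^[k] ((X + 1 : ℝ[X]) ^ b * (r : ℝ[X])) :=
      (coprime_pm.pow).mul_dvd hd1 hd2
    have hr0 : (r : ℝ[X]) = 0 := by
      by_contra hr
      have hgne : (X + 1 : ℝ[X]) ^ b * (r : ℝ[X]) ≠ 0 := mul_ne_zero (pow_ne_zero _ hXp) hr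
      have hdg : ((X + 1 : ℝ[X]) ^ b * (r : ℝ[X])).natDegree = b + (r : ℝ[X]).natDegree := by
        rw [natDegree_mul (pow_ne_zero _ hXp) hr, natDegree_pow, hx1, mul_one]
      have hrn : (r : ℝ[X]).natDegree < n - b := natDeg_of_memLT r.2 hr
      have hD0 : derivative^[k] ((X + 1 : ℝ[X]) ^ b * (r : ℝ[X])) = 0 := by
        by_contra hD
        have hmon : ((X + 1 : ℝ[X]) ^ (b - k) * (X - 1) ^ (a - k)).natDegree
            = (b - k) + (a - k) := by
          rw [natDegree_mul (pow_ne_zero _ hXp) (pow_ne_zero _ hXm),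
            natDegree_pow, natDegree_pow, hx1, hx2, mul_one, mul_one]
        have hle := Polynomial.natDegree_le_of_dvd hdp hD
        have hub := natDegree_iterate_derivative ((X + 1 : ℝ[X]) ^ b * (r : ℝ[X])) k
        omega
      rcases iter_deriv_zero hD0 with hgz | hlt
      · exact hgne hgz
      · omega
    have hs0 : (s : ℝ[X]) = 0 := by
      by_contra hs
      rw [hr0, mul_zero, zero_add] at hm'
      have hhq : (X - 1 : ℝ[X]) ^ a * (s : ℝ[X]) = -(q : ℝ[X]) :=
        eq_neg_of_add_eq_zero_left hm'
      have hdh : ((X - 1 : ℝ[X]) ^ a * (s : ℝ[X])).natDegree = a + (s : ℝ[X]).natDegree := by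
        rw [natDegree_mul (pow_ne_zero _ hXm) hs, natDegree_pow, hx2, mul_one]
      have hqd : (-(q : ℝ[X])).natDegree < k := by
        rcases eq_or_ne (q : ℝ[X]) 0 with hq | hq
        · rw [hq, neg_zero, natDegree_zero]; omega
        · rw [natDegree_neg]; exact natDeg_of_memLT q.2 hq
      rw [hhq] at hdh
      omega
    have hq0' : (q : ℝ[X]) = 0 := by
      rw [hr0, hs0, mul_zero, mul_zero, zero_add, zero_add] at hm'
      exact hm'
    exact Prod.ext (Subtype.ext hr0) (Prod.ext (Subtype.ext hs0) (Subtype.ext hq0'))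
  refine ⟨hinj, ?_⟩
  haveI i1 : Module.Finite ℝ (degreeLT ℝ (n - b)) :=
    Module.Finite.equiv (degreeLTEquiv ℝ (n - b)).symm
  haveI i2 : Module.Finite ℝ (degreeLT ℝ (n - a)) :=
    Module.Finite.equiv (degreeLTEquiv ℝ (n - a)).symm
  haveI i3 : Module.Finite ℝ (degreeLT ℝ (a + b - n)) :=
    Module.Finite.equiv (degreeLTEquiv ℝ (a + b - n)).symm
  haveI i4 : Module.Finite ℝ (degreeLT ℝ n) :=
    Module.Finite.equiv (degreeLTEquiv ℝ n).symm
  have hle : LinearMap.range (Phi3 a b n) ≤ degreeLT ℝ n := by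
    rintro x ⟨⟨r, s, q⟩, rfl⟩
    have m1 : (X + 1 : ℝ[X]) ^ b * (r : ℝ[X]) ∈ degreeLT ℝ n := by
      have := mem_deg_mul (c := (1:ℝ)) hb r.2
      simpa [Polynomial.C_1] using this
    have m2 : (X - 1 : ℝ[X]) ^ a * (s : ℝ[X]) ∈ degreeLT ℝ n := by
      have := mem_deg_mul (c := (-1:ℝ)) ha s.2
      simpa [map_neg, Polynomial.C_1, sub_eq_add_neg] using this
    have m3 : (q : ℝ[X]) ∈ degreeLT ℝ n := degreeLT_mono (by omega) q.2
    exact Submodule.add_mem _ (Submodule.add_mem _ m1 m2) m3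
  refine Submodule.eq_of_le_of_finrank_le hle ?_
  rw [finrank_degLT, LinearMap.finrank_range_of_inj hinj,
    Module.finrank_prod, Module.finrank_prod, finrank_degLT, finrank_degLT, finrank_degLT]
  omega
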